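/- If the left R-module R is weakly supplemented, then R is a semilocal ring. -/

import Mathlib

/-- A submodule `N` of `M` is small (superfluous) in `M`. -/
def IsSmallSubmodule {R M : Type*} [Ring R] [AddCommGroup M] [Module R M]
    (N : Submodule R M) : Prop :=
  ∀ K : Submodule R M, N ⊔ K = ⊤ → K = ⊤

/-- `L` is a weak supplement of `N` in `M`. -/
def IsWeakSupplement {R M : Type*} [Ring R] [AddCommGroup M] [Module R M]
    (L N : Submodule R M) : Prop :=
  N ⊔ L = ⊤ ∧ IsSmallSubmodule (N ⊓ L)

/-- A module is weakly supplemented if every submodule has a weak supplement. -/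
def IsWeaklySupplemented (R M : Type*) [Ring R] [AddCommGroup M] [Module R M] : Prop :=
  ∀ N : Submodule R M, ∃ L : Submodule R M, IsWeakSupplement L N

/-- A left ideal is left t-nilpotent if every sequence in it has a vanishing
initial left product `a 0 * a 1 * ⋯ * a (n-1) = 0`. -/
def IsLeftTNilpotent {R : Type*} [Ring R] (I : Ideal R) : Prop :=
  ∀ a : ℕ → R, (∀ i, a i ∈ I) → ∃ n : ℕ, ((List.range n).map a).prod = 0

/-- A ring is semilocal if it is semisimple modulo its Jacobson radical. -/
def IsSemilocalRing (R : Type*) [Ring R] : Prop :=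
  IsSemisimpleModule R (R ⧸ (⊥ : Ideal R).jacobson)

/-- A ring is left perfect iff it is semilocal with left t-nilpotent Jacobson radical. -/
def IsLeftPerfectRing (R : Type*) [Ring R] : Prop :=
  IsSemilocalRing R ∧ IsLeftTNilpotent (⊥ : Ideal R).jacobson

/-- A small left ideal is contained in the Jacobson radical. -/
lemma small_le_jacobson {R : Type*} [Ring R] {N : Ideal R}
    (h : IsSmallSubmodule N) : N ≤ (⊥ : Ideal R).jacobson := by
  refine le_sInf fun m hm => ?_
  by_contra hNm
  have hlt : m < N ⊔ m := right_lt_sup.mpr hNm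
  have htop : N ⊔ m = ⊤ := hm.2.1.2 _ hlt
  exact hm.2.1.1 (h m htop)

/-- If `R` is weakly supplemented as a left module over itself, then `R` is semilocal. -/
theorem stmt12 {R : Type*} [Ring R] (hws : IsWeaklySupplemented R R) :
    IsSemilocalRing R := by
  set J := (⊥ : Ideal R).jacobson with hJ
  refine (isSemisimpleModule_iff _ _).mpr ?_
  constructor
  intro P
  obtain ⟨L, hsup, hsmall⟩ := hws (P.comap J.mkQ)
  refine ⟨L.map J.mkQ, ?_, ?_⟩
  · -- disjoint
    rw [disjoint_iff]
    ext x
    simp only [Submodule.mem_inf, Submodule.mem_bot, Submodule.mem_map]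
    constructor
    · rintro ⟨hxP, l, hl, rfl⟩
      have hlN : l ∈ P.comap J.mkQ := hxP
      have : l ∈ J := small_le_jacobson hsmall ⟨hlN, hl⟩
      simpa [Submodule.Quotient.mk_eq_zero, Ideal.Quotient.eq_zero_iff_mem] using this
    · rintro rfl
      exact ⟨P.zero_mem, 0, L.zero_mem, rfl⟩
  · -- codisjoint
    rw [codisjoint_iff]
    have hsurj : Function.Surjective J.mkQ := Submodule.mkQ_surjective J
    have := congrArg (Submodule.map J.mkQ) hsup
    rw [Submodule.map_sup, Submodule.map_top, Submodule.range_mkQ,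
      Submodule.map_comap_eq_of_surjective hsurj] at this
    exact this
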